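/- Let V be a finite set, f: V → ℕ₊ a function, and ε₁, ε₂ : V → {split, inert} two labelings. For i = 1, 2 define the multiset M_i over ℕ₊ by contributing, for each v ∈ V, two copies of f(v) if ε_i(v) = split and one copy of 2·f(v) if ε_i(v) = inert. If M₁ = M₂ as multisets, then for every positive integer d, the number of v ∈ V with f(v) = d and ε₁(v) = split equals the number of v ∈ V with f(v) = d and ε₂(v) = split. Consequently there exists a bijection π: V → V with f ∘ π = f and ε₂ ∘ π = ε₁. -/
import Mathlib


/-- Let `V` be a finite set, `f : V → ℕ₊`, and `ε₁, ε₂ : V → Bool` two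
labelings (`true` = split, `false` = inert).  For `i = 1, 2` form the multiset `M_i` over
`ℕ₊` contributing, for each `v`, two copies of `f v` if `ε_i v` is split and one copy of
`2 * f v` if inert.  If `M₁ = M₂`, then for every `d` the number of split `v` with
`f v = d` is the same for `ε₁` and `ε₂`; consequently some bijection `π : V → V`
preserves `f` and carries `ε₁` to `ε₂`. -/
theorem stmt15 (V : Type*) [Fintype V] [DecidableEq V] (f : V → ℕ) (hf : ∀ v, 0 < f v)
    (ε₁ ε₂ : V → Bool)
    (hM : (Finset.univ.val.bind fun v =>
            if ε₁ v = true then ({f v, f v} : Multiset ℕ) else {2 * f v})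
        = (Finset.univ.val.bind fun v =>
            if ε₂ v = true then ({f v, f v} : Multiset ℕ) else {2 * f v})) :
    (∀ d : ℕ, 0 < d →
      (Finset.univ.filter fun v => f v = d ∧ ε₁ v = true).card
        = (Finset.univ.filter fun v => f v = d ∧ ε₂ v = true).card) ∧
    ∃ π : Equiv.Perm V, (∀ v, f (π v) = f v) ∧ ∀ v, ε₂ (π v) = ε₁ v := by
  classical
  -- count formula
  have hcount : ∀ (ε : V → Bool) (d : ℕ),
      Multiset.count d (Finset.univ.val.bind fun v =>
        if ε v = true then ({f v, f v} : Multiset ℕ) else {2 * f v})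
      = 2 * (Finset.univ.filter fun v => f v = d ∧ ε v = true).card
        + (Finset.univ.filter fun v => 2 * f v = d ∧ ε v = false).card := by
    intro ε d
    rw [Multiset.count_bind, Finset.card_filter, Finset.card_filter, Finset.mul_sum,
      ← Finset.sum_add_distrib]
    show ∑ v, Multiset.count d _ = _
    apply Finset.sum_congr rfl
    intro v _
    by_cases h : ε v = true <;>
      simp only [h, if_true, if_false, Bool.not_eq_true] <;>
      simp [Multiset.count_cons, Multiset.count_singleton, eq_comm (a := d)] <;>
      split <;> simp_all <;> omega
  have hn : ∀ d : ℕ,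
      (Finset.univ.filter fun v => f v = d ∧ ε₁ v = true).card
        = (Finset.univ.filter fun v => f v = d ∧ ε₂ v = true).card := by
    intro d
    induction d using Nat.strong_induction_on with
    | _ d ih =>
      rcases Nat.eq_zero_or_pos d with rfl | hd
      · have hz : ∀ (ε : V → Bool), (Finset.univ.filter fun v => f v = 0 ∧ ε v = true) = ∅ := by
          intro ε
          apply Finset.filter_eq_empty_iff.mpr
          intro v _
          rintro ⟨h0, -⟩
          exact (hf v).ne' h0
        rw [hz ε₁, hz ε₂]
      · -- t equality
        have hA : ∀ (ε : V → Bool),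
            (Finset.univ.filter fun v => 2 * f v = d ∧ ε v = true).card
            + (Finset.univ.filter fun v => 2 * f v = d ∧ ε v = false).card
            = (Finset.univ.filter fun v => 2 * f v = d).card := by
          intro ε
          have h1 := Finset.card_filter_add_card_filter_not
            (s := Finset.univ.filter fun v => 2 * f v = d) (p := fun v => ε v = true)
          rw [Finset.filter_filter, Finset.filter_filter] at h1
          simp only [Bool.not_eq_true] at h1
          exact h1
        have hs' : (Finset.univ.filter fun v => 2 * f v = d ∧ ε₁ v = true).card
            = (Finset.univ.filter fun v => 2 * f v = d ∧ ε₂ v = true).card := by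
          rcases Nat.even_or_odd d with ⟨e, he⟩ | ⟨k, hk⟩
          · have h1 : ∀ (ε : V → Bool), (Finset.univ.filter fun v => 2 * f v = d ∧ ε v = true)
                = (Finset.univ.filter fun v => f v = e ∧ ε v = true) := by
              intro ε; apply Finset.filter_congr; intro v _
              constructor <;> rintro ⟨h, h'⟩ <;> exact ⟨by omega, h'⟩
            rw [h1 ε₁, h1 ε₂]; exact ih e (by omega)
          · have h1 : ∀ (ε : V → Bool), (Finset.univ.filter fun v => 2 * f v = d ∧ ε v = true)
                = ∅ := by
              intro ε; apply Finset.filter_eq_empty_iff.mpr; intro v _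
              rintro ⟨h2, -⟩; omega
            rw [h1 ε₁, h1 ε₂]
        have hcnt := congrArg (Multiset.count d) hM
        rw [hcount ε₁ d, hcount ε₂ d] at hcnt
        have := hA ε₁
        have := hA ε₂
        omega
  refine ⟨fun d _ => hn d, ?_⟩
  -- fibers of g i := fun v => (f v, ε i v) have equal cards
  set g₁ : V → ℕ × Bool := fun v => (f v, ε₁ v) with hg₁
  set g₂ : V → ℕ × Bool := fun v => (f v, ε₂ v) with hg₂
  have hfib : ∀ c : ℕ × Bool, Nonempty ({v // g₁ v = c} ≃ {v // g₂ v = c}) := by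
    intro ⟨d, b⟩
    apply Fintype.card_eq.mp
    rw [Fintype.card_subtype, Fintype.card_subtype]
    have key : ∀ (ε : V → Bool), (Finset.univ.filter fun v => f v = d ∧ ε v = true).card
          = (Finset.univ.filter fun v => f v = d ∧ ε v = true).card := fun _ => rfl
    cases b
    · -- false: use totals
      have hA : ∀ (ε : V → Bool),
          (Finset.univ.filter fun v => f v = d ∧ ε v = true).card
          + (Finset.univ.filter fun v => f v = d ∧ ε v = false).card
          = (Finset.univ.filter fun v => f v = d).card := by
        intro ε
        have h1 := Finset.card_filter_add_card_filter_not
          (s := Finset.univ.filter fun v => f v = d) (p := fun v => ε v = true)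
        rw [Finset.filter_filter, Finset.filter_filter] at h1
        simp only [Bool.not_eq_true] at h1
        exact h1
      have h1 : ∀ (ε : V → Bool), (Finset.univ.filter fun v => (f v, ε v) = (d, false)).card
          = (Finset.univ.filter fun v => f v = d ∧ ε v = false).card := by
        intro ε; congr 1; apply Finset.filter_congr; intro v _; simp [Prod.ext_iff]
      show (Finset.univ.filter fun v => g₁ v = (d,false)).card
          = (Finset.univ.filter fun v => g₂ v = (d,false)).card
      rw [hg₁, hg₂, h1 ε₁, h1 ε₂]
      have := hA ε₁
      have := hA ε₂
      have := hn d
      omega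
    · have h1 : ∀ (ε : V → Bool), (Finset.univ.filter fun v => (f v, ε v) = (d, true)).card
          = (Finset.univ.filter fun v => f v = d ∧ ε v = true).card := by
        intro ε; congr 1; apply Finset.filter_congr; intro v _; simp [Prod.ext_iff]
      show (Finset.univ.filter fun v => g₁ v = (d,true)).card
          = (Finset.univ.filter fun v => g₂ v = (d,true)).card
      rw [hg₁, hg₂, h1 ε₁, h1 ε₂, hn d]
  have e := fun c => (hfib c).some
  refine ⟨(Equiv.sigmaFiberEquiv g₁).symm.trans
    ((Equiv.sigmaCongrRight e).trans (Equiv.sigmaFiberEquiv g₂)), ?_, ?_⟩ <;>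
  · intro v
    have h2 := (e (g₁ v) ⟨v, rfl⟩).2
    simp only [Equiv.trans_apply, Equiv.sigmaFiberEquiv, Equiv.sigmaCongrRight]
    simp_all [hg₁, hg₂, Prod.ext_iff]
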